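/- If A is a real N×N matrix such that A + I has only nonnegative entries and (A+I)^n has all strictly positive entries for some n, then the matrix exponential e^{At} has all strictly positive entries for every t > 0. -/

import Mathlib

open NormedSpace

lemma pow_entry_nonneg {N : ℕ} (B : Matrix (Fin N) (Fin N) ℝ)
    (h : ∀ i j, 0 ≤ B i j) (k : ℕ) : ∀ i j, 0 ≤ (B ^ k) i j := by
  induction k with
  | zero => intro i j; simp [Matrix.one_apply]; positivity
  | succ k ih =>
    intro i j
    rw [pow_succ, Matrix.mul_apply]
    exact Finset.sum_nonneg fun l _ => mul_nonneg (ih i l) (h l j)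

/-- If A + I has nonnegative entries and some power of A + I has
all strictly positive entries, then e^{At} has all strictly positive entries
for every t > 0. -/
theorem stmt1 (N : ℕ) (A : Matrix (Fin N) (Fin N) ℝ)
    (hnonneg : ∀ i j, 0 ≤ (A + 1) i j)
    (hreg : ∃ n : ℕ, ∀ i j, 0 < ((A + 1) ^ n) i j) :
    ∀ t : ℝ, 0 < t → ∀ i j, 0 < (exp (t • A)) i j := by
  letI : SeminormedRing (Matrix (Fin N) (Fin N) ℝ) := Matrix.linftyOpSemiNormedRing
  letI : NormedRing (Matrix (Fin N) (Fin N) ℝ) := Matrix.linftyOpNormedRing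
  letI : NormedAlgebra ℝ (Matrix (Fin N) (Fin N) ℝ) := Matrix.linftyOpNormedAlgebra
  letI : NormedAlgebra ℚ (Matrix (Fin N) (Fin N) ℝ) := Matrix.linftyOpNormedAlgebra
  intro t ht i j
  obtain ⟨n, hn⟩ := hreg
  set B := A + 1 with hB
  -- decompose t • A
  have hdecomp : t • A = t • B + (-t) • (1 : Matrix (Fin N) (Fin N) ℝ) := by
    rw [hB, smul_add]
    module
  have hcomm : Commute (t • B) ((-t) • (1 : Matrix (Fin N) (Fin N) ℝ)) := by
    simp [Commute, SemiconjBy]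
  have hexp : exp (t • A) = exp (t • B) * exp ((-t) • 1) := by
    erw [hdecomp, exp_add_of_commute hcomm]
    rfl
  have h1 : ((-t) • (1 : Matrix (Fin N) (Fin N) ℝ)) = algebraMap ℝ _ (-t) := by
    rw [Algebra.algebraMap_eq_smul_one]
  have hexp1 : exp ((-t) • (1 : Matrix (Fin N) (Fin N) ℝ))
      = Real.exp (-t) • (1 : Matrix (Fin N) (Fin N) ℝ) := by
    erw [h1, ← algebraMap_exp_comm, Algebra.algebraMap_eq_smul_one, Real.exp_eq_exp_ℝ]
  -- positivity of exp (t • B) entries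
  have hsummable : Summable fun k : ℕ => ((k.factorial : ℝ)⁻¹) • (t • B) ^ k :=
    expSeries_summable' (𝕂 := ℝ) (t • B)
  have hsum_entry : Summable fun k : ℕ => (((k.factorial : ℝ)⁻¹) • (t • B) ^ k) i j := by
    have h1 := Pi.summable.mp hsummable i
    exact Pi.summable.mp h1 j
  have hterm : ∀ k : ℕ, (((k.factorial : ℝ)⁻¹) • (t • B) ^ k) i j
      = ((k.factorial : ℝ)⁻¹) * t ^ k * (B ^ k) i j := by
    intro k
    rw [smul_pow]
    simp [Matrix.smul_apply, mul_assoc]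
  have hpos : 0 < (exp (t • B)) i j := by
    rw [exp_eq_tsum ℝ]
    have happ : (∑' k : ℕ, ((k.factorial : ℝ)⁻¹) • (t • B) ^ k) i j
        = ∑' k : ℕ, (((k.factorial : ℝ)⁻¹) • (t • B) ^ k) i j := by
      erw [tsum_apply hsummable, tsum_apply (Pi.summable.mp hsummable i)]
    beta_reduce
    rw [happ]
    refine Summable.tsum_pos hsum_entry (fun k => ?_) n ?_
    · rw [hterm]
      have := pow_entry_nonneg B hnonneg k i j
      positivity
    · rw [hterm]
      have := hn i j
      have h2 : (0:ℝ) < ((n.factorial : ℝ)⁻¹) := by positivity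
      positivity
  rw [hexp, hexp1]
  have : (exp (t • B) * (Real.exp (-t) • 1)) i j = Real.exp (-t) * (exp (t • B)) i j := by
    rw [mul_smul_comm, mul_one, Matrix.smul_apply, smul_eq_mul]
  rw [this]
  positivity
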